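/- Let n, k, l ∈ ℕ with 1 ≤ k, 2k ≤ n, and l ≥ (log n + 2·log 2)/(log n − log(n−k)). Then the number of k-element subsets S of ℤ_n containing no set of l cyclically consecutive elements and avoiding no set of l cyclically consecutive elements (i.e., there is no i ∈ ℤ_n with {i, i+1, ..., i+l−1} ⊆ S, and no i ∈ ℤ_n with {i, i+1, ..., i+l−1} ∩ S = ∅, arithmetic mod n) is at least (1/2)·C(n,k). -/

import Mathlib

open scoped Classical

open Finset

lemma aux_P (n k : ℕ) (hk : k ≤ n) :
    ∀ l, l ≤ n → n ^ l * Nat.choose (n - l) k ≤ (n - k) ^ l * Nat.choose n k := by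
  intro l
  induction l with
  | zero => simp
  | succ l ih =>
    intro hl
    have hln : l ≤ n := by omega
    by_cases hc : n - (l + 1) < k
    · rw [Nat.choose_eq_zero_of_lt hc]; simp
    · push_neg at hc
      set m := n - l with hm
      have hm1 : m ≥ k + 1 := by omega
      have hmn : m ≤ n := by omega
      have hmpos : 0 < m := by omega
      apply Nat.le_of_mul_le_mul_right _ hmpos
      have hid : Nat.choose (m - 1) k * m = Nat.choose m k * (m - k) := by
        have := Nat.choose_mul_succ_eq (m - 1) k
        have h1 : m - 1 + 1 = m := by omega
        rw [h1] at this
        exact this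
      have hstep : n * (m - k) ≤ (n - k) * m := by
        zify [hk, Nat.le_of_lt (by omega : k < m)]
        nlinarith [mul_nonneg (by positivity : (0:ℤ) ≤ (k:ℤ))
          (sub_nonneg.mpr (by exact_mod_cast hmn : (m:ℤ) ≤ (n:ℤ)))]
      calc n ^ (l + 1) * Nat.choose (n - (l + 1)) k * m
          = n ^ l * (Nat.choose (m - 1) k * m) * n := by
            have h2 : n - (l+1) = m - 1 := by omega
            rw [h2]; ring
        _ = n ^ l * (Nat.choose m k * (m - k)) * n := by rw [hid]
        _ = (n ^ l * Nat.choose m k) * (n * (m - k)) := by ring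
        _ ≤ ((n - k) ^ l * Nat.choose n k) * ((n - k) * m) :=
            Nat.mul_le_mul (ih hln) hstep
        _ = (n - k) ^ (l + 1) * Nat.choose n k * m := by ring

lemma aux_Q (n k : ℕ) (hk : k ≤ n) :
    ∀ l, l ≤ k → n ^ l * Nat.choose (n - l) (k - l) ≤ k ^ l * Nat.choose n k := by
  intro l
  induction l with
  | zero => simp
  | succ l ih =>
    intro hl
    have hlk : l ≤ k := by omega
    have hln : l ≤ n := by omega
    set m := n - l with hm
    set j := k - l with hj
    have hj1 : 1 ≤ j := by omega
    have hjm : j ≤ m := by omega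
    have hmpos : 0 < m := by omega
    apply Nat.le_of_mul_le_mul_right _ hmpos
    have hid : m * Nat.choose (m - 1) (j - 1) = Nat.choose m j * j := by
      have := Nat.add_one_mul_choose_eq (m - 1) (j - 1)
      have h1 : m - 1 + 1 = m := by omega
      have h2 : j - 1 + 1 = j := by omega
      rw [h1, h2] at this
      exact this
    have hstep : n * j ≤ k * m := by
      show n * (k - l) ≤ k * (n - l)
      zify [hlk, hln]
      nlinarith [mul_nonneg (by positivity : (0:ℤ) ≤ (l:ℤ))
        (sub_nonneg.mpr (by exact_mod_cast hk : (k:ℤ) ≤ (n:ℤ)))]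
    calc n ^ (l + 1) * Nat.choose (n - (l + 1)) (k - (l + 1)) * m
        = n ^ l * (m * Nat.choose (m - 1) (j - 1)) * n := by
          have h2 : n - (l+1) = m - 1 := by omega
          have h3 : k - (l+1) = j - 1 := by omega
          rw [h2, h3]; ring
      _ = n ^ l * (Nat.choose m j * j) * n := by rw [hid]
      _ = (n ^ l * Nat.choose m j) * (n * j) := by ring
      _ ≤ (k ^ l * Nat.choose n k) * (k * m) := Nat.mul_le_mul (ih hlk) hstep
      _ = k ^ (l + 1) * Nat.choose n k * m := by ring

lemma count_disjoint {α : Type*} [Fintype α] [DecidableEq α] (T : Finset α) (k : ℕ) :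
    ((Finset.univ.powersetCard k).filter (fun S => Disjoint T S)).card
      = (Fintype.card α - T.card).choose k := by
  have h : ((Finset.univ.powersetCard k).filter (fun S => Disjoint T S)) = Tᶜ.powersetCard k := by
    ext S
    simp only [Finset.mem_filter, Finset.mem_powersetCard, Finset.subset_univ, true_and]
    constructor
    · rintro ⟨hcard, hd⟩
      exact ⟨le_compl_iff_disjoint_left.mpr hd, hcard⟩
    · rintro ⟨hsub, hcard⟩
      exact ⟨hcard, le_compl_iff_disjoint_left.mp hsub⟩
  rw [h, Finset.card_powersetCard, Finset.card_compl]

lemma count_superset {α : Type*} [Fintype α] [DecidableEq α] (T : Finset α) (k : ℕ)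
    (hT : T.card ≤ k) (hk : k ≤ Fintype.card α) :
    ((Finset.univ.powersetCard k).filter (fun S => T ⊆ S)).card
      = (Fintype.card α - T.card).choose (k - T.card) := by
  have himg : ((Finset.univ.powersetCard k).filter (fun S => T ⊆ S)).image (·ᶜ)
      = ((Finset.univ.powersetCard (Fintype.card α - k)).filter (fun S => Disjoint T S)) := by
    ext S
    simp only [Finset.mem_image, Finset.mem_filter, Finset.mem_powersetCard_univ]
    constructor
    · rintro ⟨U, ⟨hcard, hsub⟩, rfl⟩
      refine ⟨?_, ?_⟩
      · rw [Finset.card_compl, hcard]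
      · exact disjoint_compl_right.mono_left hsub
    · rintro ⟨hcard, hd⟩
      refine ⟨Sᶜ, ⟨?_, ?_⟩, by simp⟩
      · rw [Finset.card_compl, hcard]; omega
      · exact le_compl_iff_disjoint_right.mpr hd
  have hinj := Finset.card_image_of_injective
    ((Finset.univ.powersetCard k).filter (fun S => T ⊆ S)) (compl_injective (α := Finset α))
  rw [himg] at hinj
  rw [← hinj, count_disjoint]
  have h5 : Fintype.card α - k = (Fintype.card α - T.card) - (k - T.card) := by omega
  rw [h5, Nat.choose_symm (by omega)]


lemma real_key (n k l : ℕ) (hk : 1 ≤ k) (hkn : 2 * k ≤ n)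
    (hl : (Real.log n + 2 * Real.log 2) / (Real.log n - Real.log ((n : ℝ) - k)) ≤ (l : ℝ)) :
    4 * (n : ℝ) * ((n : ℝ) - k) ^ l ≤ (n : ℝ) ^ l := by
  have hn2 : 2 ≤ n := by omega
  have hnk1 : (1 : ℝ) ≤ (n : ℝ) - k := by
    have : (k : ℝ) + 1 ≤ n := by exact_mod_cast (by omega : k + 1 ≤ n)
    linarith
  have hnkpos : (0 : ℝ) < (n : ℝ) - k := by linarith
  have hnpos : (0 : ℝ) < n := by positivity
  have hlt : (n : ℝ) - k < n := by
    have : (1 : ℝ) ≤ k := by exact_mod_cast hk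
    linarith
  have ha : 0 < Real.log n - Real.log ((n : ℝ) - k) :=
    sub_pos.mpr (Real.log_lt_log hnkpos hlt)
  have hla : Real.log n + 2 * Real.log 2 ≤ l * (Real.log n - Real.log ((n : ℝ) - k)) := by
    rw [div_le_iff₀ ha] at hl
    linarith
  have hlog : Real.log (4 * (n : ℝ) * ((n : ℝ) - k) ^ l) ≤ Real.log ((n : ℝ) ^ l) := by
    rw [Real.log_mul (by positivity) (by positivity), Real.log_mul (by norm_num) (by positivity),
      Real.log_pow, Real.log_pow]
    have h4 : Real.log 4 = 2 * Real.log 2 := by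
      rw [show (4 : ℝ) = 2 ^ 2 by norm_num, Real.log_pow]; push_cast; ring
    rw [h4]
    nlinarith [hla]
  exact (Real.log_le_log_iff (by positivity) (by positivity)).mp hlog

/-- For `1 ≤ k`, `2k ≤ n` and `l ≥ (log n + 2 log 2)/(log n - log(n-k))`, the number of
`k`-element subsets `S` of `ℤ_n` containing no set of `l` cyclically consecutive
elements and avoiding no set of `l` cyclically consecutive elements is at least
`(1/2)·C(n,k)`. -/
theorem count_subsets_without_long_runs (n k l : ℕ) (hk : 1 ≤ k) (hkn : 2 * k ≤ n)
    (hl : (Real.log n + 2 * Real.log 2) / (Real.log n - Real.log ((n : ℝ) - k)) ≤ (l : ℝ)) :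
    (1 / 2 : ℝ) * (n.choose k : ℝ) ≤
      (Set.ncard {S : Finset (ZMod n) | S.card = k ∧
        (¬ ∃ i : ZMod n, ∀ t : ℕ, t < l → i + (t : ZMod n) ∈ S) ∧
        (¬ ∃ i : ZMod n, ∀ t : ℕ, t < l → i + (t : ZMod n) ∉ S)} : ℝ) := by
  have hn2 : 2 ≤ n := by omega
  haveI : NeZero n := ⟨by omega⟩
  have hcard : Fintype.card (ZMod n) = n := ZMod.card n
  have hkn' : k < n := by omega
  set F : Finset (Finset (ZMod n)) := Finset.univ.filter (fun S => S.card = k ∧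
        (¬ ∃ i : ZMod n, ∀ t : ℕ, t < l → i + (t : ZMod n) ∈ S) ∧
        (¬ ∃ i : ZMod n, ∀ t : ℕ, t < l → i + (t : ZMod n) ∉ S)) with hF
  have hX : {S : Finset (ZMod n) | S.card = k ∧
        (¬ ∃ i : ZMod n, ∀ t : ℕ, t < l → i + (t : ZMod n) ∈ S) ∧
        (¬ ∃ i : ZMod n, ∀ t : ℕ, t < l → i + (t : ZMod n) ∉ S)} = ↑F := by
    ext S; simp [hF]
  rw [hX, Set.ncard_coe_finset]
  have hCnonneg : (0 : ℝ) ≤ (n.choose k : ℝ) := by positivity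
  by_cases hnl : n ≤ l
  · -- runs longer than n cover everything: no bad sets at all
    have hF2 : F = Finset.univ.powersetCard k := by
      ext S
      simp only [hF, Finset.mem_filter, Finset.mem_univ, true_and,
        Finset.mem_powersetCard_univ]
      constructor
      · rintro ⟨h, -, -⟩; exact h
      · intro hSk
        refine ⟨hSk, ?_, ?_⟩
        · rintro ⟨i, hi⟩
          have hSu : S = Finset.univ := by
            ext x
            simp only [Finset.mem_univ, iff_true]
            have hv := ZMod.val_lt (x - i)
            have := hi (x - i).val (by omega)
            rwa [ZMod.natCast_rightInverse (x - i), add_sub_cancel] at this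
          rw [hSu, Finset.card_univ, hcard] at hSk
          omega
        · rintro ⟨i, hi⟩
          have hSe : S = ∅ := by
            apply Finset.eq_empty_iff_forall_notMem.mpr
            intro x hx
            have hv := ZMod.val_lt (x - i)
            have := hi (x - i).val (by omega)
            rw [ZMod.natCast_rightInverse (x - i), add_sub_cancel] at this
            exact this hx
          rw [hSe] at hSk
          simp at hSk
          omega
    rw [hF2, Finset.card_powersetCard, Finset.card_univ, hcard]
    linarith
  · push_neg at hnl
    have hln : l ≤ n := by omega
    set R : ZMod n → Finset (ZMod n) :=
      fun i => (Finset.range l).image (fun t : ℕ => i + (t : ZMod n)) with hRdef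
    have hR : ∀ i, (R i).card = l := by
      intro i
      rw [hRdef]
      rw [Finset.card_image_of_injOn, Finset.card_range]
      intro t1 h1 t2 h2 h
      simp only [Finset.coe_range, Set.mem_Iio] at h1 h2
      have h' : (t1 : ZMod n) = (t2 : ZMod n) := by
        exact add_left_cancel h
      have := congrArg ZMod.val h'
      rwa [ZMod.val_natCast_of_lt (by omega), ZMod.val_natCast_of_lt (by omega)] at this
    have hPR : ∀ S : Finset (ZMod n),
        (∃ i : ZMod n, ∀ t : ℕ, t < l → i + (t : ZMod n) ∈ S) ↔ ∃ i, R i ⊆ S := by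
      intro S
      refine exists_congr fun i => ?_
      rw [hRdef]
      simp [Finset.image_subset_iff]
    have hQR : ∀ S : Finset (ZMod n),
        (∃ i : ZMod n, ∀ t : ℕ, t < l → i + (t : ZMod n) ∉ S) ↔ ∃ i, Disjoint (R i) S := by
      intro S
      refine exists_congr fun i => ?_
      rw [hRdef, Finset.disjoint_left]
      simp
    set A : Finset (Finset (ZMod n)) := Finset.univ.powersetCard k with hAdef
    have hA : A.card = n.choose k := by
      rw [hAdef, Finset.card_powersetCard, Finset.card_univ, hcard]
    set B1 : Finset (Finset (ZMod n)) := A.filter (fun S => ∃ i, R i ⊆ S) with hB1def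
    set B2 : Finset (Finset (ZMod n)) := A.filter (fun S => ∃ i, Disjoint (R i) S) with hB2def
    have hsplit : F = A \ (B1 ∪ B2) := by
      ext S
      simp only [hF, hB1def, hB2def, hAdef, Finset.mem_filter, Finset.mem_univ, true_and,
        Finset.mem_sdiff, Finset.mem_union, Finset.mem_powersetCard_univ, hPR, hQR]
      tauto
    have hcardF : F.card + (B1 ∪ B2).card = A.card := by
      rw [hsplit, Finset.card_sdiff_add_card]
      congr 1
      rw [Finset.union_eq_left]
      exact Finset.union_subset (Finset.filter_subset _ _) (Finset.filter_subset _ _)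
    -- bound B2
    have hB2 : B2.card ≤ n * Nat.choose (n - l) k := by
      have hsub : B2 ⊆ Finset.univ.biUnion
          (fun i : ZMod n => A.filter (fun S => Disjoint (R i) S)) := by
        intro S hS
        rw [hB2def, Finset.mem_filter] at hS
        obtain ⟨hSA, i, hi⟩ := hS
        exact Finset.mem_biUnion.mpr ⟨i, Finset.mem_univ i, Finset.mem_filter.mpr ⟨hSA, hi⟩⟩
      calc B2.card ≤ _ := Finset.card_le_card hsub
        _ ≤ ∑ i : ZMod n, (A.filter (fun S => Disjoint (R i) S)).card :=
            Finset.card_biUnion_le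
        _ = ∑ i : ZMod n, Nat.choose (n - l) k := by
            refine Finset.sum_congr rfl fun i _ => ?_
            rw [hAdef, count_disjoint, hR, hcard]
        _ = n * Nat.choose (n - l) k := by
            rw [Finset.sum_const, Finset.card_univ, hcard, smul_eq_mul]
    -- bound B1
    have hkey := real_key n k l hk hkn hl
    have hnk_cast : ((n - k : ℕ) : ℝ) = (n : ℝ) - k := by
      push_cast [Nat.cast_sub (le_of_lt hkn')]; ring
    have hnlpos : (0 : ℝ) < (n : ℝ) ^ l := by positivity
    have h2R : (B2.card : ℝ) ≤ (n.choose k : ℝ) / 4 := by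
      have hP := aux_P n k (le_of_lt hkn') l hln
      have hPc : (n : ℝ) ^ l * ((n - l).choose k : ℝ)
          ≤ ((n : ℝ) - k) ^ l * (n.choose k : ℝ) := by
        have := Nat.cast_le (α := ℝ).mpr hP
        push_cast at this
        rwa [hnk_cast] at this
      have hB2c : (B2.card : ℝ) ≤ (n : ℝ) * ((n - l).choose k : ℝ) := by
        exact_mod_cast Nat.cast_le (α := ℝ).mpr hB2
      nlinarith [hnlpos, hCnonneg, hB2c, hPc, hkey,
        mul_nonneg (by positivity : (0:ℝ) ≤ 4 * (n:ℝ)) (le_of_lt hnlpos),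
        Nat.cast_nonneg (α := ℝ) ((n - l).choose k),
        Nat.cast_nonneg (α := ℝ) n]
    have h1R : (B1.card : ℝ) ≤ (n.choose k : ℝ) / 4 := by
      by_cases hlk : l ≤ k
      · have hB1 : B1.card ≤ n * Nat.choose (n - l) (k - l) := by
          have hsub : B1 ⊆ Finset.univ.biUnion
              (fun i : ZMod n => A.filter (fun S => R i ⊆ S)) := by
            intro S hS
            rw [hB1def, Finset.mem_filter] at hS
            obtain ⟨hSA, i, hi⟩ := hS
            exact Finset.mem_biUnion.mpr ⟨i, Finset.mem_univ i, Finset.mem_filter.mpr ⟨hSA, hi⟩⟩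
          calc B1.card ≤ _ := Finset.card_le_card hsub
            _ ≤ ∑ i : ZMod n, (A.filter (fun S => R i ⊆ S)).card :=
                Finset.card_biUnion_le
            _ = ∑ i : ZMod n, Nat.choose (n - l) (k - l) := by
                refine Finset.sum_congr rfl fun i _ => ?_
                rw [hAdef, count_superset (R i) k (by rw [hR]; exact hlk)
                  (by rw [hcard]; omega), hR, hcard]
            _ = n * Nat.choose (n - l) (k - l) := by
                rw [Finset.sum_const, Finset.card_univ, hcard, smul_eq_mul]
        have hQ := aux_Q n k (le_of_lt hkn') l hlk
        have hkle : (k : ℝ) ^ l ≤ ((n : ℝ) - k) ^ l := by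
          apply pow_le_pow_left₀ (by positivity)
          have : (2 : ℝ) * k ≤ n := by exact_mod_cast hkn
          linarith
        have hQc : (n : ℝ) ^ l * ((n - l).choose (k - l) : ℝ)
            ≤ ((n : ℝ) - k) ^ l * (n.choose k : ℝ) := by
          have := Nat.cast_le (α := ℝ).mpr hQ
          push_cast at this
          calc (n : ℝ) ^ l * ((n - l).choose (k - l) : ℝ)
              ≤ (k : ℝ) ^ l * (n.choose k : ℝ) := this
            _ ≤ ((n : ℝ) - k) ^ l * (n.choose k : ℝ) :=
                mul_le_mul_of_nonneg_right hkle hCnonneg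
        have hB1c : (B1.card : ℝ) ≤ (n : ℝ) * ((n - l).choose (k - l) : ℝ) := by
          exact_mod_cast Nat.cast_le (α := ℝ).mpr hB1
        nlinarith [hnlpos, hCnonneg, hB1c, hQc, hkey,
          Nat.cast_nonneg (α := ℝ) ((n - l).choose (k - l)),
          Nat.cast_nonneg (α := ℝ) n]
      · have hB1e : B1 = ∅ := by
          rw [hB1def]
          apply Finset.filter_false_of_mem
          intro S hS
          rintro ⟨i, hi⟩
          rw [hAdef, Finset.mem_powersetCard_univ] at hS
          have := Finset.card_le_card hi
          rw [hR, hS] at this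
          omega
        rw [hB1e]
        simp
        positivity
    -- assemble
    have hcardFc : (F.card : ℝ) + ((B1 ∪ B2).card : ℝ) = (A.card : ℝ) := by
      exact_mod_cast congrArg (Nat.cast : ℕ → ℝ) hcardF
    have hunion : ((B1 ∪ B2).card : ℝ) ≤ (B1.card : ℝ) + (B2.card : ℝ) := by
      exact_mod_cast Nat.cast_le (α := ℝ).mpr (Finset.card_union_le B1 B2)
    rw [hA] at hcardFc
    linarith
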